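/- Let H be a Hilbert space, U ⊂ ℂ open connected, and A : U → B(H) an analytic family of compact operators. If (Id − A(λ₀))⁻¹ exists for some λ₀ ∈ U, then the set of λ ∈ U for which Id − A(λ) is not invertible is a discrete subset of U. -/

import Mathlib

open Metric in
/-- Finite-rank approximation of a compact operator on a Hilbert space. -/
lemma approx_finite_rank {H : Type*} [NormedAddCommGroup H] [InnerProductSpace ℂ H]
    [CompleteSpace H] {T : H →L[ℂ] H} (hT : IsCompactOperator T) {ε : ℝ} (hε : 0 < ε) :
    ∃ (n : ℕ) (f : Fin n → H) (F : H →L[ℂ] H), Orthonormal ℂ f ∧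
      (∀ x, F x = ∑ i, (inner ℂ (f i) (F x) : ℂ) • f i) ∧ ‖T - F‖ < ε := by
  obtain ⟨K, hK, hTK⟩ := hT.image_closedBall_subset_compact 1
  obtain ⟨t, -, htf, htc⟩ := hK.finite_cover_balls (half_pos hε)
  set V : Submodule ℂ H := Submodule.span ℂ t with hV
  haveI : FiniteDimensional ℂ V := FiniteDimensional.span_of_finite ℂ htf
  haveI : CompleteSpace V := FiniteDimensional.complete ℂ V
  set P : H →L[ℂ] V := V.orthogonalProjectionOnto with hP
  set F : H →L[ℂ] H := V.subtypeL.comp (P.comp T) with hF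
  set b := stdOrthonormalBasis ℂ V with hb
  refine ⟨Module.finrank ℂ V, fun i => (b i : H), F, ?_, ?_, ?_⟩
  · exact b.orthonormal.comp_linearIsometry V.subtypeₗᵢ
  · intro x
    have hFx : F x = ((P (T x) : V) : H) := rfl
    rw [hFx]
    conv_lhs => rw [← b.sum_repr (P (T x))]
    push_cast
    congr 1
    ext i
    congr 1
    rw [b.repr_apply_apply]
    exact (Submodule.coe_inner V (b i) (P (T x)))
  · -- operator norm bound
    have key : ∀ x, ‖x‖ ≤ 1 → ‖T x - F x‖ ≤ ε / 2 := by
      intro x hx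
      have hmem : T x ∈ K := hTK ⟨x, by simpa [mem_closedBall] using hx, rfl⟩
      obtain ⟨y, hyt, hy⟩ := Set.mem_iUnion₂.1 (htc hmem)
      have hyV : y ∈ V := Submodule.subset_span hyt
      have h1 : ‖T x - F x‖ = ⨅ w : V, ‖T x - w‖ := Submodule.starProjection_minimal (U := V) (T x)
      have h2 : (⨅ w : V, ‖T x - (w : H)‖) ≤ ‖T x - y‖ := by
        refine ciInf_le ⟨0, ?_⟩ (⟨y, hyV⟩ : V)
        rintro r ⟨w, rfl⟩; positivity
      rw [h1]
      exact h2.trans (le_of_lt (by simpa [mem_ball, dist_eq_norm] using hy))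
    have hle : ‖T - F‖ ≤ ε / 2 := by
      refine ContinuousLinearMap.opNorm_le_bound _ (by positivity) fun x => ?_
      rcases eq_or_ne x 0 with rfl | hx0
      · simp
      · have hnx : (0:ℝ) < ‖x‖ := norm_pos_iff.2 hx0
        have := key (‖x‖⁻¹ • x) (by rw [norm_smul]; simp [hnx.ne', inv_mul_cancel₀ hnx.ne'])
        have heq : (T - F) (‖x‖⁻¹ • x) = (‖x‖⁻¹ : ℂ) • ((T - F) x) := by
          rw [← map_smul]; norm_cast
        simp only [← ContinuousLinearMap.sub_apply] at this
        rw [heq, norm_smul] at this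
        have h3 : ‖x‖⁻¹ * ‖(T - F) x‖ ≤ ε / 2 := by
          simpa [abs_of_pos hnx] using this
        have h5 := mul_le_mul_of_nonneg_left h3 hnx.le
        rw [← mul_assoc, mul_inv_cancel₀ hnx.ne', one_mul] at h5
        linarith
    linarith


open ContinuousLinearMap in
/-- Invertibility of `1 - G` for a finite rank `G` is detected by a determinant. -/
lemma oneSub_finiteRank_isUnit_iff {H : Type*} [NormedAddCommGroup H]
    [InnerProductSpace ℂ H] [CompleteSpace H] {n : ℕ} (u φ : Fin n → H)
    (hu : LinearIndependent ℂ u) (G : H →L[ℂ] H)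
    (hG : ∀ x, G x = ∑ i, (inner ℂ (φ i) x : ℂ) • u i) :
    IsUnit (1 - G) ↔
      (Matrix.of fun i j => (if i = j then (1:ℂ) else 0) - inner ℂ (φ i) (u j)).det ≠ 0 := by
  set M : Matrix (Fin n) (Fin n) ℂ :=
    Matrix.of fun i j => (if i = j then (1:ℂ) else 0) - inner ℂ (φ i) (u j) with hM
  constructor
  · -- if det M = 0 then 1 - G is not a unit
    intro hunit hdet
    exfalso
    obtain ⟨c, hc0, hc⟩ := (Matrix.exists_mulVec_eq_zero_iff).2 hdet
    set x : H := ∑ j, c j • u j with hx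
    have hφx : ∀ i, (inner ℂ (φ i) x : ℂ) = c i := by
      intro i
      have := congrFun hc i
      rw [Matrix.mulVec, dotProduct] at this
      simp only [hM, Matrix.of_apply, sub_mul, Finset.sum_sub_distrib, ite_mul, one_mul,
        zero_mul, Finset.sum_ite_eq, Finset.mem_univ, if_true, Pi.zero_apply] at this
      have h2 : (inner ℂ (φ i) x : ℂ) = ∑ j, inner ℂ (φ i) (u j) * c j := by
        rw [hx, inner_sum]
        congr 1; ext j; rw [inner_smul_right]; ring
      rw [h2]
      linear_combination -this
    have hGx : G x = x := by
      rw [hG x]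
      simp_rw [hφx]
      rfl
    have hx0 : x ≠ 0 := by
      intro h
      apply hc0
      have := (Fintype.linearIndependent_iff.1 hu) c (by rw [← hx, h])
      ext j; exact this j
    obtain ⟨e, he⟩ := hunit
    have : x = 0 := by
      have h1 : (1 - G) x = 0 := by
        simp [ContinuousLinearMap.sub_apply, hGx]
      have h2 : ((e⁻¹ : (H →L[ℂ] H)ˣ) : H →L[ℂ] H) ((1 - G) x) = x := by
        rw [← he, ← ContinuousLinearMap.mul_apply, e.inv_mul]
        simp
      rw [h1] at h2
      simpa using h2.symm
    exact hx0 this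
  · -- if det M ≠ 0 then 1 - G is a unit
    intro hdet
    set N : Matrix (Fin n) (Fin n) ℂ := M⁻¹ with hN
    have hMN : M * N = 1 := Matrix.mul_nonsing_inv M (isUnit_iff_ne_zero.2 hdet)
    have hNM : N * M = 1 := Matrix.nonsing_inv_mul M (isUnit_iff_ne_zero.2 hdet)
    set R : H →L[ℂ] H := ∑ i, ∑ j, N i j • ((innerSL ℂ (φ j)).smulRight (u i)) with hRdef
    have hR : ∀ x, R x = ∑ i, (∑ j, N i j * (inner ℂ (φ j) x : ℂ)) • u i := by
      intro x
      simp [hRdef, ContinuousLinearMap.sum_apply, ContinuousLinearMap.smul_apply,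
        ContinuousLinearMap.smulRight_apply, innerSL_apply_apply, Finset.sum_smul, smul_smul]
    have hMentry : ∀ i j, M i j = (if i = j then (1:ℂ) else 0) - inner ℂ (φ i) (u j) := by
      intro i j; rfl
    -- coefficient identity from M * N = 1
    have hcoef1 : ∀ (i : Fin n) (c : Fin n → ℂ),
        c i + ∑ j, (∑ k, N j k * c k) * (inner ℂ (φ i) (u j) : ℂ) = ∑ k, N i k * c k := by
      intro i c
      have hMNik : ∀ k, ∑ j, (inner ℂ (φ i) (u j) : ℂ) * N j k
          = N i k - (if i = k then 1 else 0) := by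
        intro k
        have h := congrFun (congrFun hMN i) k
        rw [Matrix.mul_apply] at h
        simp only [hMentry, sub_mul, Finset.sum_sub_distrib, ite_mul, one_mul, zero_mul,
          Finset.sum_ite_eq, Finset.mem_univ, if_true, Matrix.one_apply] at h
        linear_combination -h
      have hswap : ∑ j, (∑ k, N j k * c k) * (inner ℂ (φ i) (u j) : ℂ)
          = ∑ k, (∑ j, (inner ℂ (φ i) (u j) : ℂ) * N j k) * c k := by
        simp_rw [Finset.sum_mul]
        rw [Finset.sum_comm]
        congr 1; ext j; congr 1; ext k; ring
      rw [hswap]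
      have expand : ∑ k, (∑ j, (inner ℂ (φ i) (u j) : ℂ) * N j k) * c k
          = (∑ k, N i k * c k) - c i := by
        have h9 : ∀ k ∈ Finset.univ, (∑ j, (inner ℂ (φ i) (u j) : ℂ) * N j k) * c k
            = N i k * c k - (if i = k then c k else 0) := by
          intro k _; rw [hMNik]; split <;> ring
        rw [Finset.sum_congr rfl h9, Finset.sum_sub_distrib]
        simp
      rw [expand]; ring
    -- coefficient identity from N * M = 1
    have hcoef2 : ∀ (i : Fin n) (c : Fin n → ℂ),
        c i + ∑ k, N i k * (∑ j, (inner ℂ (φ k) (u j) : ℂ) * c j) = ∑ k, N i k * c k := by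
      intro i c
      have hNMij : ∀ j, ∑ k, N i k * (inner ℂ (φ k) (u j) : ℂ)
          = N i j - (if i = j then 1 else 0) := by
        intro j
        have h := congrFun (congrFun hNM i) j
        rw [Matrix.mul_apply] at h
        simp only [hMentry, mul_sub, Finset.sum_sub_distrib, mul_ite, mul_one, mul_zero,
          Finset.sum_ite_eq', Finset.mem_univ, if_true, Matrix.one_apply] at h
        linear_combination -h
      have hswap : ∑ k, N i k * (∑ j, (inner ℂ (φ k) (u j) : ℂ) * c j)
          = ∑ j, (∑ k, N i k * (inner ℂ (φ k) (u j) : ℂ)) * c j := by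
        simp_rw [Finset.mul_sum, Finset.sum_mul]
        rw [Finset.sum_comm]
        congr 1; ext k; congr 1; ext j; ring
      rw [hswap]
      have expand : ∑ j, (∑ k, N i k * (inner ℂ (φ k) (u j) : ℂ)) * c j
          = (∑ j, N i j * c j) - c i := by
        have h9 : ∀ j ∈ Finset.univ, (∑ k, N i k * (inner ℂ (φ k) (u j) : ℂ)) * c j
            = N i j * c j - (if i = j then c j else 0) := by
          intro j _; rw [hNMij]; split <;> ring
        rw [Finset.sum_congr rfl h9, Finset.sum_sub_distrib]
        simp
      rw [expand]; ring
    have key1 : ∀ x, G x + G (R x) = R x := by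
      intro x
      have hinner : ∀ i, (inner ℂ (φ i) (R x) : ℂ)
          = ∑ j, (∑ k, N j k * (inner ℂ (φ k) x : ℂ)) * (inner ℂ (φ i) (u j) : ℂ) := by
        intro i
        rw [hR, inner_sum]
        congr 1; ext j; rw [inner_smul_right]; try ring
      rw [hG (R x)]
      simp_rw [hinner]
      rw [hG x, hR x, ← Finset.sum_add_distrib]
      congr 1; ext i
      rw [← add_smul, hcoef1 i (fun k => (inner ℂ (φ k) x : ℂ))]
    have key2 : ∀ x, G x + R (G x) = R x := by
      intro x
      have hinner : ∀ k, (inner ℂ (φ k) (G x) : ℂ)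
          = ∑ j, (inner ℂ (φ k) (u j) : ℂ) * (inner ℂ (φ j) x : ℂ) := by
        intro k
        rw [hG, inner_sum]
        congr 1; ext j; rw [inner_smul_right]; try ring
      rw [hR (G x), hR x]
      simp_rw [hinner]
      rw [hG x, ← Finset.sum_add_distrib]
      congr 1; ext i
      rw [← add_smul]
      congr 1
      have h8 := hcoef2 i (fun j => (inner ℂ (φ j) x : ℂ))
      simpa using h8
    have h1 : (1 - G) * (1 + R) = 1 := by
      ext x
      have hk := key1 x
      simp only [ContinuousLinearMap.mul_apply, ContinuousLinearMap.sub_apply,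
        ContinuousLinearMap.add_apply, ContinuousLinearMap.one_apply, map_add]
      rw [show G (R x) = R x - G x by rw [eq_sub_iff_add_eq, add_comm]; exact hk]
      abel
    have h2 : (1 + R) * (1 - G) = 1 := by
      ext x
      have hk := key2 x
      simp only [ContinuousLinearMap.mul_apply, ContinuousLinearMap.sub_apply,
        ContinuousLinearMap.add_apply, ContinuousLinearMap.one_apply, map_sub]
      rw [show R (G x) = R x - G x by rw [eq_sub_iff_add_eq, add_comm]; exact key2 x]
      abel
    exact ⟨⟨1 - G, 1 + R, h1, h2⟩, rfl⟩

open Metric ContinuousLinearMap in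
lemma local_structure {H : Type*} [NormedAddCommGroup H] [InnerProductSpace ℂ H]
    [CompleteSpace H] {U : Set ℂ} (hU : IsOpen U) {A : ℂ → H →L[ℂ] H}
    (hA : AnalyticOnNhd ℂ A U) {z₀ : ℂ} (hz₀ : z₀ ∈ U)
    (hcz : IsCompactOperator (A z₀)) :
    ∃ r > 0, ball z₀ r ⊆ U ∧ ∃ d : ℂ → ℂ, AnalyticOnNhd ℂ d (ball z₀ r) ∧
      ∀ lam ∈ ball z₀ r, (IsUnit (1 - A lam) ↔ d lam ≠ 0) := by
  obtain ⟨n, f, F, hf, hFrep, hTF⟩ := approx_finite_rank hcz (by norm_num : (0:ℝ) < 1/2)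
  -- find a ball where ‖A lam - A z₀‖ < 1/2 and ball ⊆ U
  have hcont : ContinuousAt A z₀ := (hA z₀ hz₀).continuousAt
  rw [Metric.continuousAt_iff] at hcont
  obtain ⟨r₁, hr₁, hball₁⟩ := hcont (1/2) (by norm_num)
  obtain ⟨r₂, hr₂, hball₂⟩ := Metric.isOpen_iff.1 hU z₀ hz₀
  refine ⟨min r₁ r₂, lt_min hr₁ hr₂, (ball_subset_ball (min_le_right _ _)).trans hball₂, ?_⟩
  have hBnorm : ∀ lam ∈ ball z₀ (min r₁ r₂), ‖A lam - F‖ < 1 := by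
    intro lam hlam
    have h1 : dist (A lam) (A z₀) < 1/2 :=
      hball₁ (lt_of_lt_of_le (mem_ball.1 hlam) (min_le_left _ _))
    calc ‖A lam - F‖ ≤ ‖A lam - A z₀‖ + ‖A z₀ - F‖ := by
          simpa using norm_sub_le_norm_sub_add_norm_sub (A lam) (A z₀) F
      _ < 1/2 + 1/2 := by rw [dist_eq_norm] at h1; linarith
      _ = 1 := by norm_num
  set C : ℂ → H →L[ℂ] H := fun lam => Ring.inverse (1 - (A lam - F)) with hC
  set φ : Fin n → H := fun i => (ContinuousLinearMap.adjoint F) (f i) with hφ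
  set d : ℂ → ℂ := fun lam =>
    (Matrix.of fun i j => (if i = j then (1:ℂ) else 0) - inner ℂ (φ i) (C lam (f j))).det
    with hd
  have hunitB : ∀ lam ∈ ball z₀ (min r₁ r₂), IsUnit (1 - (A lam - F)) := fun lam hlam =>
    (Units.oneSub (A lam - F) (hBnorm lam hlam)).isUnit
  have hCanalytic : ∀ lam ∈ ball z₀ (min r₁ r₂), AnalyticAt ℂ C lam := by
    intro lam hlam
    have hAl : AnalyticAt ℂ A lam :=
      hA lam (((ball_subset_ball (min_le_right _ _)).trans hball₂) hlam)
    have hB : AnalyticAt ℂ (fun w => 1 - (A w - F)) lam :=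
      analyticAt_const.sub (hAl.sub analyticAt_const)
    have hinv : AnalyticAt ℂ (Ring.inverse : (H →L[ℂ] H) → (H →L[ℂ] H))
        ((1 : H →L[ℂ] H) - (A lam - F)) := by
      have h := analyticAt_inverse (𝕜 := ℂ) (hunitB lam hlam).unit
      rwa [IsUnit.unit_spec] at h
    have hcomp := AnalyticAt.comp (g := (Ring.inverse : (H →L[ℂ] H) → (H →L[ℂ] H)))
      (f := fun w => (1 : H →L[ℂ] H) - (A w - F)) (x := lam) hinv hB
    exact hcomp
  refine ⟨d, ?_, ?_⟩
  · -- analyticity of d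
    intro lam hlam
    have hentry : ∀ i j : Fin n,
        AnalyticAt ℂ (fun w => (if i = j then (1:ℂ) else 0) - inner ℂ (φ i) (C w (f j))) lam := by
      intro i j
      refine analyticAt_const.sub ?_
      have : (fun w => (inner ℂ (φ i) (C w (f j)) : ℂ))
          = fun w => ((innerSL ℂ (φ i)).comp (ContinuousLinearMap.apply ℂ H (f j))) (C w) :=
        rfl
      rw [this]
      exact (((innerSL ℂ (φ i)).comp
        (ContinuousLinearMap.apply ℂ H (f j))).analyticAt _).comp (hCanalytic lam hlam)
    have hdet : d = fun w => ∑ σ : Equiv.Perm (Fin n),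
        (Equiv.Perm.sign σ : ℂ) * ∏ i,
          (Matrix.of fun i j => (if i = j then (1:ℂ) else 0) - inner ℂ (φ i) (C w (f j))) (σ i) i := by
      funext w
      simp only [hd]
      rw [Matrix.det_apply]
      congr 1; ext σ
      rw [Units.smul_def, zsmul_eq_mul]
      try push_cast
      try ring
    rw [hdet]
    refine Finset.analyticAt_fun_sum _ fun σ _ => analyticAt_const.mul ?_
    exact Finset.analyticAt_fun_prod _ fun i _ => by simpa using hentry (σ i) i
  · -- invertibility criterion
    intro lam hlam
    have hB := hunitB lam hlam
    have hBC : (1 - (A lam - F)) * C lam = 1 := Ring.mul_inverse_cancel _ hB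
    have hCB : C lam * (1 - (A lam - F)) = 1 := Ring.inverse_mul_cancel _ hB
    have hfact : 1 - A lam = (1 - (A lam - F)) * (1 - C lam * F) := by
      rw [mul_sub, mul_one, ← mul_assoc, hBC, one_mul]
      abel
    have hGrep : ∀ x, (C lam * F) x = ∑ i, (inner ℂ (φ i) x : ℂ) • C lam (f i) := by
      intro x
      have h1 : (C lam * F) x = C lam (F x) := rfl
      rw [h1, hFrep x, map_sum]
      congr 1; ext i
      rw [map_smul]
      have h2 : (inner ℂ (f i) (F x) : ℂ) = inner ℂ (φ i) x := by
        simp only [hφ]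
        exact (ContinuousLinearMap.adjoint_inner_left F x (f i)).symm
      rw [h2]
    have hCinj : Function.Injective (C lam) := by
      intro x y hxy
      have h1 := congrArg (fun v => (1 - (A lam - F)) v) hxy
      simpa [← ContinuousLinearMap.mul_apply, hBC] using h1
    have hu : LinearIndependent ℂ (fun i => C lam (f i)) := by
      have := hf.linearIndependent
      exact this.map' (C lam : H →ₗ[ℂ] H) (LinearMap.ker_eq_bot.2 hCinj)
    have hiff := oneSub_finiteRank_isUnit_iff (fun i => C lam (f i)) φ hu (C lam * F) hGrep
    rw [hfact]
    rw [show (1 : H →L[ℂ] H) - (A lam - F) = ((hunitB lam hlam).unit : H →L[ℂ] H) from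
      ((hunitB lam hlam).unit_spec).symm]
    rw [Units.isUnit_units_mul]
    exact hiff

open Metric Filter Topology in
/-- The analytic Fredholm theorem: if `A : U → B(H)` is an analytic family of compact
operators on a Hilbert space `H`, `U ⊂ ℂ` open and connected, and `Id - A(λ₀)` is
invertible for some `λ₀ ∈ U`, then the set of `λ ∈ U` at which `Id - A(λ)` fails to be
invertible is discrete in `U` (no accumulation point in `U`). -/
theorem stmt13 {H : Type*} [NormedAddCommGroup H] [InnerProductSpace ℂ H] [CompleteSpace H]
    (U : Set ℂ) (hU : IsOpen U) (hUconn : IsConnected U)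
    (A : ℂ → H →L[ℂ] H) (hA : AnalyticOnNhd ℂ A U)
    (hcpt : ∀ lam ∈ U, IsCompactOperator (A lam))
    (lam₀ : ℂ) (hlam₀ : lam₀ ∈ U) (hinv : IsUnit (1 - A lam₀)) :
    ∀ z ∈ U, ¬ AccPt z (Filter.principal {lam ∈ U | ¬ IsUnit (1 - A lam)}) := by
  -- dichotomy from the local structure
  have dich : ∀ z ∈ U, ∃ r > 0, ball z r ⊆ U ∧
      ((∀ w ∈ ball z r, ∀ᶠ lam in 𝓝[≠] w, IsUnit (1 - A lam)) ∨
       (∀ lam ∈ ball z r, ¬ IsUnit (1 - A lam))) := by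
    intro z hz
    obtain ⟨r, hr, hball, d, hdana, hdiff⟩ := local_structure hU hA hz (hcpt z hz)
    by_cases hall : ∀ lam ∈ ball z r, d lam = 0
    · exact ⟨r, hr, hball, Or.inr fun lam hlam h =>
        ((hdiff lam hlam).1 h) (hall lam hlam)⟩
    · push_neg at hall
      obtain ⟨lam₁, hlam₁, hdlam₁⟩ := hall
      refine ⟨r, hr, hball, Or.inl fun w hw => ?_⟩
      rcases (hdana w hw).eventually_eq_zero_or_eventually_ne_zero with hev | hev
      · exfalso
        have := hdana.eqOn_zero_of_preconnected_of_eventuallyEq_zero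
          (convex_ball z r).isPreconnected hw hev
        exact hdlam₁ (this hlam₁)
      · have hmem : ∀ᶠ lam in 𝓝[≠] w, lam ∈ ball z r :=
          eventually_nhdsWithin_of_eventually_nhds (isOpen_ball.eventually_mem hw)
        filter_upwards [hev, hmem] with lam h1 h2
        exact (hdiff lam h2).2 h1
  -- the two open sets
  set V₁ : Set ℂ := interior {z | ∀ᶠ lam in 𝓝[≠] z, IsUnit (1 - A lam)} with hV₁
  set V₂ : Set ℂ := interior {lam | ¬ IsUnit (1 - A lam)} with hV₂
  have hsub : U ⊆ V₁ ∪ V₂ := by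
    intro z hz
    obtain ⟨r, hr, hball, hcase⟩ := dich z hz
    rcases hcase with hc | hc
    · exact Or.inl (mem_interior.2 ⟨ball z r, fun w hw => hc w hw, isOpen_ball,
        mem_ball_self hr⟩)
    · exact Or.inr (mem_interior.2 ⟨ball z r, fun w hw => hc w hw, isOpen_ball,
        mem_ball_self hr⟩)
  have hdisj : U ∩ (V₁ ∩ V₂) = ∅ := by
    ext z
    simp only [Set.mem_inter_iff, Set.mem_empty_iff_false, iff_false, not_and]
    intro _ h1 h2
    have hp0 := interior_subset h1
    have hp : ∀ᶠ lam in 𝓝[≠] z, IsUnit (1 - A lam) := hp0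
    have hq0 : {lam : ℂ | ¬ IsUnit (1 - A lam)} ∈ 𝓝 z :=
      Filter.mem_of_superset (isOpen_interior.mem_nhds h2) interior_subset
    have hq1 : ∀ᶠ lam in 𝓝 z, ¬ IsUnit (1 - A lam) := hq0
    have hq : ∀ᶠ lam in 𝓝[≠] z, ¬ IsUnit (1 - A lam) :=
      eventually_nhdsWithin_of_eventually_nhds hq1
    have : ∀ᶠ lam in 𝓝[≠] z, False := by filter_upwards [hp, hq] with lam ha hb; exact hb ha
    exact (this.exists).elim fun _ h => h
  have hmem₁ : lam₀ ∈ U ∩ V₁ := by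
    obtain ⟨r, hr, hball, hcase⟩ := dich lam₀ hlam₀
    rcases hcase with hc | hc
    · exact ⟨hlam₀, mem_interior.2 ⟨ball lam₀ r, fun w hw => hc w hw, isOpen_ball,
        mem_ball_self hr⟩⟩
    · exact absurd hinv (hc lam₀ (mem_ball_self hr))
  have hV₂empty : U ∩ V₂ = ∅ := by
    by_contra hne
    have h := hUconn.isPreconnected V₁ V₂ isOpen_interior isOpen_interior hsub
      ⟨lam₀, hmem₁⟩ (Set.nonempty_iff_ne_empty.2 hne)
    rw [hdisj] at h
    exact h.ne_empty rfl
  -- conclude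
  intro z hz hacc
  have hzV₁ : z ∈ V₁ := by
    rcases hsub hz with h | h
    · exact h
    · exact ((Set.eq_empty_iff_forall_notMem.1 hV₂empty z) ⟨hz, h⟩).elim
  have hp0 := interior_subset hzV₁
  have hp : ∀ᶠ lam in 𝓝[≠] z, IsUnit (1 - A lam) := hp0
  rw [accPt_iff_frequently] at hacc
  have hfreq : ∃ᶠ lam in 𝓝[≠] z, lam ∈ {lam | lam ∈ U ∧ ¬ IsUnit (1 - A lam)} := by
    rw [frequently_nhdsWithin_iff]
    exact hacc.mono fun y hy => ⟨hy.2, hy.1⟩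
  have : ∃ᶠ lam in 𝓝[≠] z, False := by
    refine (hfreq.and_eventually hp).mono ?_
    rintro lam ⟨⟨-, h1⟩, h2⟩
    exact h1 h2
  exact (this.exists).elim fun _ h => h
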